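/- arXiv:1004.3212 — 2 statements merged into one kernel-verified Lean document; each statement's English description precedes it below -/
import Mathlib

section
/- Interlacing determinant identity: for real numbers x₁^{m} < x₂^{m} < … (with x_{m+1}^m a 'virtual' symbol), define φ(x,y) = 1 if x > y, 0 otherwise, and φ(virt, y) = 1. Then det[φ(x_i^m, x_j^{m+1})]_{1≤i,j≤m+1} equals 1 if the interlacing x₁^{m+1} < x₁^m ≤ x₂^{m+1} < x₂^m ≤ … < x_m^m ≤ x_{m+1}^{m+1} holds, and 0 otherwise. -/
open Finset

private lemma count_mem_iff {n : ℕ} {b : Fin n → ℝ} (hb : StrictMono b) (x : ℝ) (j : Fin n) :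
    b j < x ↔ (j : ℕ) < (univ.filter fun k => b k < x).card := by
  constructor
  · intro h
    have hsub : Finset.Iic j ⊆ univ.filter fun k => b k < x := by
      intro k hk
      simp only [mem_Iic] at hk
      simp only [mem_filter, mem_univ, true_and]
      exact lt_of_le_of_lt (hb.monotone hk) h
    have := Finset.card_le_card hsub
    rw [Fin.card_Iic] at this
    omega
  · intro h
    by_contra hx
    push_neg at hx
    have hsub : (univ.filter fun k => b k < x) ⊆ Finset.Iio j := by
      intro k hk
      simp only [mem_filter, mem_univ, true_and] at hk
      simp only [mem_Iio]
      by_contra hk2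
      push_neg at hk2
      exact absurd hk (not_lt.2 (le_trans hx (hb.monotone hk2)))
    have := Finset.card_le_card hsub
    rw [Fin.card_Iio] at this
    omega

open Classical in
theorem interlacing_det_identity (m : ℕ) (hm : 1 ≤ m)
    (a : Fin m → ℝ) (b : Fin (m + 1) → ℝ)
    (ha : StrictMono a) (hb : StrictMono b) :
    (Matrix.of fun i j : Fin (m + 1) =>
        if h : (i : ℕ) < m then (if b j < a ⟨(i : ℕ), h⟩ then (1 : ℝ) else 0) else 1).det
      = if (∀ i : Fin m, b (Fin.castSucc i) < a i ∧ a i ≤ b i.succ) then 1 else 0 := by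
  set A : ℝ := max (a ⟨m - 1, by omega⟩) (b (Fin.last m)) + 1 with hA
  set a' : Fin (m + 1) → ℝ := fun i => if h : (i : ℕ) < m then a ⟨(i : ℕ), h⟩ else A with ha'
  have ha'top : ∀ i : Fin (m + 1), ¬ (i : ℕ) < m → ∀ j : Fin (m + 1), b j < a' i := by
    intro i hi j
    have h1 : b j ≤ b (Fin.last m) := hb.monotone (Fin.le_last j)
    have h2 : b (Fin.last m) ≤ max (a ⟨m - 1, by omega⟩) (b (Fin.last m)) := le_max_right _ _
    simp only [ha', dif_neg hi, hA]
    linarith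
  have ha'mono : Monotone a' := by
    intro i j hij
    by_cases hi : (i : ℕ) < m
    · by_cases hj : (j : ℕ) < m
      · simp only [ha', dif_pos hi, dif_pos hj]
        exact ha.monotone (by rw [Fin.mk_le_mk]; exact hij)
      · simp only [ha', dif_pos hi, dif_neg hj, hA]
        have h1 : a ⟨(i : ℕ), hi⟩ ≤ a ⟨m - 1, by omega⟩ :=
          ha.monotone (by simp [Fin.le_def]; omega)
        have h2 := le_max_left (a ⟨m - 1, by omega⟩) (b (Fin.last m))
        linarith
    · have hj : ¬ (j : ℕ) < m := by
        have : (i : ℕ) ≤ (j : ℕ) := hij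
        omega
      simp only [ha', dif_neg hi, dif_neg hj]
      exact le_refl A
  set c : Fin (m + 1) → ℕ := fun i => (univ.filter fun k => b k < a' i).card with hc
  have hMN : (Matrix.of fun i j : Fin (m + 1) =>
        if h : (i : ℕ) < m then (if b j < a ⟨(i : ℕ), h⟩ then (1 : ℝ) else 0) else 1)
      = Matrix.of fun i j : Fin (m + 1) => if (j : ℕ) < c i then (1 : ℝ) else 0 := by
    ext i j
    simp only [Matrix.of_apply]
    by_cases hi : (i : ℕ) < m
    · rw [dif_pos hi]
      have : b j < a ⟨(i : ℕ), hi⟩ ↔ (j : ℕ) < c i := by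
        simp only [hc]
        have : a' i = a ⟨(i : ℕ), hi⟩ := by simp [ha', hi]
        rw [this]
        exact count_mem_iff hb _ j
      simp [this]
    · rw [dif_neg hi]
      have h1 : b j < a' i := ha'top i hi j
      have h2 : (j : ℕ) < c i := (count_mem_iff hb (a' i) j).1 h1
      simp [h2]
  rw [hMN]
  have hcmem : ∀ (i j : Fin (m + 1)), b j < a' i ↔ (j : ℕ) < c i := fun i j =>
    count_mem_iff hb (a' i) j
  have hclast : ∀ i : Fin (m + 1), ¬ (i : ℕ) < m → c i = m + 1 := by
    intro i hi
    simp only [hc]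
    have : (univ.filter fun k => b k < a' i) = univ := by
      apply Finset.filter_true_of_mem
      intro k _
      exact ha'top i hi k
    rw [this]
    simp
  by_cases hP : ∀ i : Fin m, b (Fin.castSucc i) < a i ∧ a i ≤ b i.succ
  · rw [if_pos hP]
    have hci : ∀ i : Fin (m + 1), c i = (i : ℕ) + 1 := by
      intro i
      by_cases hi : (i : ℕ) < m
      · have hai : a' i = a ⟨(i : ℕ), hi⟩ := by simp [ha', hi]
        simp only [hc]
        have hfe : (univ.filter fun k => b k < a' i) = Finset.Iic ⟨(i : ℕ), by omega⟩ := by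
          ext k
          simp only [mem_filter, mem_univ, true_and, mem_Iic, hai, Fin.le_def]
          constructor
          · intro hk
            by_contra hk2
            push_neg at hk2
            have hle : ((⟨(i : ℕ), hi⟩ : Fin m).succ : Fin (m + 1)) ≤ k := by
              simp only [Fin.le_def, Fin.val_succ]; omega
            have := (hP ⟨(i : ℕ), hi⟩).2
            have := hb.monotone hle
            linarith
          · intro hk
            have hle : k ≤ Fin.castSucc ⟨(i : ℕ), hi⟩ := by simp only [Fin.le_def, Fin.coe_castSucc]; omega
            have := (hP ⟨(i : ℕ), hi⟩).1
            have := hb.monotone hle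
            linarith
        rw [hfe, Fin.card_Iic]
      · rw [hclast i hi]
        have : (i : ℕ) = m := by omega
        omega
    have htri : (Matrix.of fun i j : Fin (m + 1) =>
        if (j : ℕ) < c i then (1 : ℝ) else 0).BlockTriangular OrderDual.toDual := by
      intro i j hij
      have : (i : ℕ) < (j : ℕ) := hij
      simp only [Matrix.of_apply, hci]
      rw [if_neg (by omega)]
    rw [Matrix.det_of_lowerTriangular _ htri]
    have : ∀ i : Fin (m + 1), (Matrix.of fun i j : Fin (m + 1) =>
        if (j : ℕ) < c i then (1 : ℝ) else 0) i i = 1 := by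
      intro i
      simp [hci]
    rw [Finset.prod_congr rfl fun i _ => this i]
    simp
  · rw [if_neg hP]
    by_cases hz : ∃ i, c i = 0
    · obtain ⟨i, hi⟩ := hz
      apply Matrix.det_eq_zero_of_row_eq_zero i
      intro j
      simp [hi]
    · by_cases hinj : Function.Injective c
      · exfalso
        have hcmono : Monotone c := by
          intro i j hij
          apply Finset.card_le_card
          intro k hk
          simp only [mem_filter, mem_univ, true_and] at hk ⊢
          exact lt_of_lt_of_le hk (ha'mono hij)
        have hcs : StrictMono c := hcmono.strictMono_of_injective hinj
        have key : ∀ k : ℕ, ∀ i j : Fin (m + 1), (j : ℕ) = (i : ℕ) + k → c i + k ≤ c j := by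
          intro k
          induction k with
          | zero =>
            intro i j h
            have : i = j := Fin.ext (by omega)
            simp [this]
          | succ k ih =>
            intro i j h
            have hjlt : (j : ℕ) < m + 1 := j.isLt
            have hj' : (i : ℕ) + k < m + 1 := by omega
            have h1 := ih i ⟨(i : ℕ) + k, hj'⟩ rfl
            have h2 : c ⟨(i : ℕ) + k, hj'⟩ < c j := hcs (by simp only [Fin.lt_def]; omega)
            omega
        push_neg at hz
        have hge1 : ∀ i, 1 ≤ c i := fun i => Nat.one_le_iff_ne_zero.2 (hz i)
        have hclast' : c (Fin.last m) = m + 1 := hclast _ (by simp)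
        have hci : ∀ i : Fin (m + 1), c i = (i : ℕ) + 1 := by
          intro i
          have hile : (i : ℕ) ≤ m := Fin.is_le i
          have h1 := key (m - (i : ℕ)) i (Fin.last m) (by simp [Fin.last]; omega)
          have h2 := key (i : ℕ) ⟨0, by omega⟩ i (by simp)
          have h3 := hge1 ⟨0, by omega⟩
          omega
        apply hP
        intro i
        have hcast : a' (Fin.castSucc i) = a i := by
          simp [ha', Fin.is_lt i]
        constructor
        · have : (Fin.castSucc i : ℕ) < c (Fin.castSucc i) := by
            rw [hci]; omega
          have := (hcmem (Fin.castSucc i) (Fin.castSucc i)).2 this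
          rwa [hcast] at this
        · by_contra hlt
          push_neg at hlt
          rw [← hcast] at hlt
          have := (hcmem (Fin.castSucc i) i.succ).1 hlt
          rw [hci] at this
          simp at this
      · rw [Function.not_injective_iff] at hinj
        obtain ⟨i, j, hcij, hij⟩ := hinj
        apply Matrix.det_zero_of_row_eq hij
        funext k
        simp [hcij]
end

section
/- Biorthogonality of the TASEP step-IC functions: with Ψ_k^n(x) = (1/2πi)∮_{Γ_0} dw e^{t(w−1)} (1−w)^k / w^{x+n+1} and Φ_j^n(x) = (−1/2πi)∮_{Γ_1} dz e^{−t(z−1)} z^{x+n} / (1−z)^{j+1}, one has ∑_{x ≥ −n} Ψ_k^n(x) Φ_j^n(x) = δ_{j,k} for 0 ≤ j,k ≤ n−1. -/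
/-- `Ψ_k^n(x) = (1/2πi) ∮_{Γ₀} dw e^{t(w-1)} (1-w)^k / w^{x+n+1}`, with `Γ₀` a small
positively oriented circle around `0` (not containing `1`). -/
noncomputable def PsiTASEP (n k : ℕ) (t : ℝ) (x : ℤ) : ℂ :=
  1 / (2 * (Real.pi : ℂ) * Complex.I) *
    ∮ w in C((0 : ℂ), 1/2),
      Complex.exp ((t : ℂ) * (w - 1)) * (1 - w) ^ k / w ^ (x + (n : ℤ) + 1)

/-- `Φ_j^n(x) = (-1/2πi) ∮_{Γ₁} dz e^{-t(z-1)} z^{x+n} / (1-z)^{j+1}`, with `Γ₁` a small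
positively oriented circle around `1` (not containing `0`). -/
noncomputable def PhiTASEP (n j : ℕ) (t : ℝ) (x : ℤ) : ℂ :=
  (-1) / (2 * (Real.pi : ℂ) * Complex.I) *
    ∮ z in C((1 : ℂ), 1/4),
      Complex.exp (-(t : ℂ) * (z - 1)) * z ^ (x + (n : ℤ)) / (1 - z) ^ (j + 1)

namespace TASEPBiorthAux

open Finset Nat

lemma hasSum_cexp (z : ℂ) : HasSum (fun n : ℕ => z ^ n / n !) (Complex.exp z) := by
  rw [Complex.exp_eq_exp_ℂ]
  exact NormedSpace.expSeries_div_hasSum_exp z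

lemma hasSum_shift {g : ℕ → ℂ} {S : ℂ} (b : ℕ) (h : HasSum g S) :
    HasSum (fun m : ℕ => if b ≤ m then g (m - b) else 0) S := by
  refine (hasSum_nat_add_iff' (f := fun m : ℕ => if b ≤ m then g (m - b) else 0) b).1 ?_
  have h2 : (∑ i ∈ range b, if b ≤ i then g (i - b) else 0) = 0 :=
    Finset.sum_eq_zero fun i hi => if_neg (by simpa using (mem_range.1 hi))
  rw [h2, sub_zero]
  have e : ∀ n : ℕ, (if b ≤ n + b then g (n + b - b) else 0) = g n := fun n => by
    rw [if_pos (Nat.le_add_left _ _), Nat.add_sub_cancel]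
  simpa only [e] using h

lemma choose_div_factorial (m d : ℕ) (hd : d ≤ m) :
    (m.choose d : ℂ) / m ! = 1 / (d ! * (m - d)!) := by
  rw [div_eq_div_iff]
  · rw [one_mul]
    norm_cast
    rw [← Nat.choose_mul_factorial_mul_factorial hd]; ring
  · exact_mod_cast (Nat.factorial_pos m).ne'
  · exact mul_ne_zero (by exact_mod_cast (Nat.factorial_pos d).ne')
      (by exact_mod_cast (Nat.factorial_pos (m - d)).ne')

lemma hasSum_choose_exp (t : ℂ) (d : ℕ) :
    HasSum (fun r : ℕ => (r.choose d : ℂ) * t ^ r / r !) (t ^ d / d ! * Complex.exp t) := by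
  have h := hasSum_shift d ((hasSum_cexp t).mul_left (t ^ d / (d ! : ℂ)))
  have e : ∀ r : ℕ, (if d ≤ r then t ^ d / (d ! : ℂ) * (t ^ (r - d) / (r - d)!) else 0)
      = (r.choose d : ℂ) * t ^ r / r ! := by
    intro r
    by_cases hr : d ≤ r
    · rw [if_pos hr]
      have hpow : t ^ d * t ^ (r - d) = t ^ r := by
        rw [← pow_add, Nat.add_sub_cancel' hr]
      calc t ^ d / (d ! : ℂ) * (t ^ (r - d) / (r - d)!)
          = t ^ d * t ^ (r - d) * (1 / ((d ! : ℂ) * (r - d)!)) := by ring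
        _ = t ^ r * ((r.choose d : ℂ) / r !) := by rw [hpow, choose_div_factorial r d hr]
        _ = (r.choose d : ℂ) * t ^ r / r ! := by ring
    · rw [if_neg hr, Nat.choose_eq_zero_of_lt (lt_of_not_ge hr)]
      simp
  simpa only [e] using h

lemma hasSum_add_choose_exp (t : ℂ) (q l : ℕ) :
    HasSum (fun r : ℕ => (((q + r).choose l : ℕ) : ℂ) * t ^ r / r !)
      (Complex.exp t * ∑ s ∈ range (l + 1), (q.choose s : ℂ) * t ^ (l - s) / (l - s)!) := by
  have hv : ∀ r : ℕ, (((q + r).choose l : ℕ) : ℂ) * t ^ r / r !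
      = ∑ s ∈ range (l + 1), (q.choose s : ℂ) * ((r.choose (l - s) : ℂ) * t ^ r / r !) := by
    intro r
    rw [Nat.add_choose_eq, Finset.Nat.sum_antidiagonal_eq_sum_range_succ_mk]
    push_cast
    rw [Finset.sum_mul, Finset.sum_div]
    exact Finset.sum_congr rfl fun s _ => by ring
  have H : HasSum (fun r : ℕ => ∑ s ∈ range (l + 1), (q.choose s : ℂ) * ((r.choose (l - s) : ℂ) * t ^ r / r !))
      (∑ s ∈ range (l + 1), (q.choose s : ℂ) * (t ^ (l - s) / (l - s)! * Complex.exp t)) :=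
    hasSum_sum fun s _ => (hasSum_choose_exp t (l - s)).mul_left _
  have e4 : Complex.exp t * ∑ s ∈ range (l + 1), (q.choose s : ℂ) * t ^ (l - s) / (l - s)!
      = ∑ s ∈ range (l + 1), (q.choose s : ℂ) * (t ^ (l - s) / (l - s)! * Complex.exp t) := by
    rw [Finset.mul_sum]; exact Finset.sum_congr rfl fun s _ => by ring
  rw [e4]
  simpa only [hv] using H

lemma hasSum_exp_poly (s : ℂ) (K : ℕ) (q : ℕ → ℂ) (y : ℂ) :
    HasSum (fun m : ℕ => (∑ b ∈ range (K + 1), if b ≤ m then q b * s ^ (m - b) / (m - b)! else 0) * y ^ m)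
      (Complex.exp (s * y) * ∑ b ∈ range (K + 1), q b * y ^ b) := by
  have step : ∀ b : ℕ, HasSum (fun m : ℕ => if b ≤ m then q b * s ^ (m - b) / (m - b)! * y ^ m else 0)
      (q b * y ^ b * Complex.exp (s * y)) := by
    intro b
    have e1 : ∀ r : ℕ, q b * y ^ b * ((s * y) ^ r / r !) = q b * s ^ r / r ! * y ^ (r + b) := by
      intro r; rw [mul_pow, pow_add]; ring
    have hg : HasSum (fun r : ℕ => q b * s ^ r / r ! * y ^ (r + b)) (q b * y ^ b * Complex.exp (s * y)) := by
      simpa only [e1] using (hasSum_cexp (s * y)).mul_left (q b * y ^ b)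
    have h2 := hasSum_shift b hg
    have e2 : ∀ m : ℕ, (if b ≤ m then q b * s ^ (m - b) / (m - b)! * y ^ (m - b + b) else 0)
        = (if b ≤ m then q b * s ^ (m - b) / (m - b)! * y ^ m else 0) := by
      intro m; by_cases hm : b ≤ m
      · rw [if_pos hm, if_pos hm, Nat.sub_add_cancel hm]
      · rw [if_neg hm, if_neg hm]
    simpa only [e2] using h2
  have Hsum := hasSum_sum (f := fun b m => if b ≤ m then q b * s ^ (m - b) / (m - b)! * y ^ m else 0)
    (fun b (_ : b ∈ range (K + 1)) => step b)
  have e3 : ∀ m : ℕ, (∑ b ∈ range (K + 1), if b ≤ m then q b * s ^ (m - b) / (m - b)! * y ^ m else 0)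
      = (∑ b ∈ range (K + 1), if b ≤ m then q b * s ^ (m - b) / (m - b)! else 0) * y ^ m := by
    intro m; rw [Finset.sum_mul]
    exact Finset.sum_congr rfl fun b _ => by split_ifs <;> simp
  have e4 : (∑ b ∈ range (K + 1), q b * y ^ b * Complex.exp (s * y))
      = Complex.exp (s * y) * ∑ b ∈ range (K + 1), q b * y ^ b := by
    rw [Finset.mul_sum]; exact Finset.sum_congr rfl fun b _ => by ring
  rw [← e4]
  simpa only [e3] using Hsum

lemma circleIntegral_eq_coeff {f : ℂ → ℂ} (hf : Differentiable ℂ f) (c : ℂ) {R : NNReal} (hR : 0 < R)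
    (a : ℕ → ℂ) (H : ∀ y : ℂ, HasSum (fun m : ℕ => a m * y ^ m) (f (c + y))) (p : ℕ) :
    (2 * (Real.pi : ℂ) * Complex.I)⁻¹ * (∮ z in C(c, (R : ℝ)), f z / (z - c) ^ (p + 1)) = a p := by
  set q : FormalMultilinearSeries ℂ ℂ ℂ :=
    (fun n => ContinuousMultilinearMap.mkPiRing ℂ (Fin n) (a n)) with hqdef
  have hqn : ∀ n, ‖q n‖ = ‖a n‖ := fun n => ContinuousMultilinearMap.norm_mkPiRing _
  have hrad : q.radius = ⊤ := by
    refine ENNReal.eq_top_of_forall_nnreal_le fun r => ?_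
    have hsum : Summable (fun m : ℕ => a m * (((r : ℝ) : ℂ)) ^ m) := (H ((r : ℝ) : ℂ)).summable
    have hnorm : ∀ m : ℕ, ‖a m * (((r : ℝ) : ℂ)) ^ m‖ = ‖q m‖ * (r : ℝ) ^ m := by
      intro m
      rw [norm_mul, norm_pow, hqn]
      congr 2
      rw [Complex.norm_real]
      exact abs_of_nonneg r.coe_nonneg
    refine q.le_radius_of_tendsto (l := 0) ?_
    have := hsum.tendsto_atTop_zero.norm
    simp only [norm_zero] at this
    simpa only [hnorm] using this
  have hq : HasFPowerSeriesOnBall f q c ⊤ :=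
    { r_le := by rw [hrad]
      r_pos := ENNReal.zero_lt_top
      hasSum := by
        intro y _
        have e : ∀ n : ℕ, (q n fun _ => y) = a n * y ^ n := by
          intro n
          simp [hqdef, ContinuousMultilinearMap.mkPiRing_apply, Fin.prod_const, smul_eq_mul,
            mul_comm]
        rw [show (fun n => q n fun _ => y) = fun n => a n * y ^ n from funext e]
        exact H y }
  have hcb := hf.hasFPowerSeriesOnBall c hR
  have heq : cauchyPowerSeries f c R = q :=
    hcb.hasFPowerSeriesAt.eq_formalMultilinearSeries hq.hasFPowerSeriesAt
  have happ := congrArg (fun (M : ContinuousMultilinearMap ℂ (fun _ : Fin p => ℂ) ℂ) =>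
    M (fun _ => 1)) (congrFun heq p)
  simp only [cauchyPowerSeries_apply] at happ
  have hap : (q p fun _ => (1 : ℂ)) = a p := by
    simp [hqdef, ContinuousMultilinearMap.mkPiRing_apply, Fin.prod_const]
  rw [hap] at happ
  have eint : (fun z : ℂ => ((1 : ℂ) / (z - c)) ^ p • ((z - c)⁻¹ • f z))
      = fun z : ℂ => f z / (z - c) ^ (p + 1) := by
    funext z
    rw [smul_eq_mul, smul_eq_mul, one_div, div_eq_mul_inv, ← inv_pow, pow_succ]
    ring
  rw [eint] at happ
  rw [← happ, smul_eq_mul]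

lemma psi_eq (n k : ℕ) (t : ℝ) (m : ℕ) :
    PsiTASEP n k t (-(n : ℤ) + m)
      = Complex.exp (-(t : ℂ)) * ∑ b ∈ range (k + 1),
          if b ≤ m then ((-1 : ℂ) ^ b * (k.choose b : ℂ)) * (t : ℂ) ^ (m - b) / (m - b)! else 0 := by
  have hf : Differentiable ℂ (fun w : ℂ => Complex.exp ((t : ℂ) * (w - 1)) * (1 - w) ^ k) := by
    fun_prop
  have H : ∀ y : ℂ, HasSum (fun m : ℕ =>
      (Complex.exp (-(t : ℂ)) * ∑ b ∈ range (k + 1),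
        if b ≤ m then ((-1 : ℂ) ^ b * (k.choose b : ℂ)) * (t : ℂ) ^ (m - b) / (m - b)! else 0) * y ^ m)
      ((fun w : ℂ => Complex.exp ((t : ℂ) * (w - 1)) * (1 - w) ^ k) (0 + y)) := by
    intro y
    have h1 := (hasSum_exp_poly (t : ℂ) k (fun b => (-1 : ℂ) ^ b * (k.choose b : ℂ)) y).mul_left
      (Complex.exp (-(t : ℂ)))
    have e1 : ∀ m : ℕ, Complex.exp (-(t : ℂ)) * ((∑ b ∈ range (k + 1),
        if b ≤ m then ((-1 : ℂ) ^ b * (k.choose b : ℂ)) * (t : ℂ) ^ (m - b) / (m - b)! else 0) * y ^ m)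
        = (Complex.exp (-(t : ℂ)) * ∑ b ∈ range (k + 1),
        if b ≤ m then ((-1 : ℂ) ^ b * (k.choose b : ℂ)) * (t : ℂ) ^ (m - b) / (m - b)! else 0) * y ^ m :=
      fun m => by ring
    have hb : ((1 : ℂ) - y) ^ k = ∑ b ∈ range (k + 1), ((-1 : ℂ) ^ b * (k.choose b : ℂ)) * y ^ b := by
      have h := add_pow (-y) (1 : ℂ) k
      rw [show (-y + (1 : ℂ)) = 1 - y by ring] at h
      rw [h]
      exact Finset.sum_congr rfl fun b _ => by rw [neg_pow]; ring
    have e2 : Complex.exp (-(t : ℂ)) * (Complex.exp ((t : ℂ) * y)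
        * ∑ b ∈ range (k + 1), ((-1 : ℂ) ^ b * (k.choose b : ℂ)) * y ^ b)
        = Complex.exp ((t : ℂ) * (0 + y - 1)) * (1 - (0 + y)) ^ k := by
      rw [← mul_assoc, ← Complex.exp_add, show (0 : ℂ) + y = y by ring, ← hb]
      congr 2
      ring
    rw [show ((fun w : ℂ => Complex.exp ((t : ℂ) * (w - 1)) * (1 - w) ^ k) (0 + y)) = Complex.exp ((t : ℂ) * (0 + y - 1)) * (1 - (0 + y)) ^ k from rfl, ← e2]
    simpa only [e1] using h1
  have key := circleIntegral_eq_coeff hf 0 (R := (1/2 : NNReal)) (by norm_num) _ H m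
  have hrad : (((1/2 : NNReal)) : ℝ) = (1/2 : ℝ) := by norm_num
  rw [hrad] at key
  have eint : (fun w : ℂ => Complex.exp ((t : ℂ) * (w - 1)) * (1 - w) ^ k / w ^ ((-(n : ℤ) + m) + n + 1))
      = fun w : ℂ => Complex.exp ((t : ℂ) * (w - 1)) * (1 - w) ^ k / (w - 0) ^ (m + 1) := by
    funext w
    rw [sub_zero, show ((-(n : ℤ) + m) + n + 1) = ((m + 1 : ℕ) : ℤ) by push_cast; ring, zpow_natCast]
  unfold PsiTASEP
  rw [one_div, eint, key]

lemma guard_sum_eq (j m : ℕ) (c : ℕ → ℂ) :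
    (∑ l ∈ range (m + 1), if l ≤ j then (m.choose l : ℂ) * c l else 0)
      = ∑ l ∈ range (j + 1), (m.choose l : ℂ) * c l := by
  have h1 : (∑ l ∈ range (m + 1), if l ≤ j then (m.choose l : ℂ) * c l else 0)
      = ∑ l ∈ range (m + j + 1), if l ≤ j then (m.choose l : ℂ) * c l else 0 :=
    Finset.sum_subset (Finset.range_subset_range.2 (by omega)) fun l hl' hl => by
      have hml : m < l := by
        by_contra hc
        exact hl (mem_range.2 (by omega))
      rw [Nat.choose_eq_zero_of_lt hml]
      simp
  have h2 : (∑ l ∈ range (m + j + 1), if l ≤ j then (m.choose l : ℂ) * c l else 0)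
      = ∑ l ∈ range (j + 1), if l ≤ j then (m.choose l : ℂ) * c l else 0 :=
    (Finset.sum_subset (Finset.range_subset_range.2 (by omega)) fun l _ hl =>
      if_neg (fun h => hl (mem_range.2 (by omega)))).symm
  rw [h1, h2]
  exact Finset.sum_congr rfl fun l hl => if_pos (by have := mem_range.1 hl; omega)

lemma phi_eq (n j : ℕ) (t : ℝ) (m : ℕ) :
    PhiTASEP n j t (-(n : ℤ) + m)
      = (-1 : ℂ) ^ j * ∑ l ∈ range (j + 1), (m.choose l : ℂ) * ((-(t : ℂ)) ^ (j - l) / (j - l)!) := by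
  have hf : Differentiable ℂ (fun z : ℂ => Complex.exp (-(t : ℂ) * (z - 1)) * z ^ m) := by
    fun_prop
  have H : ∀ y : ℂ, HasSum (fun i : ℕ =>
      (∑ l ∈ range (m + 1), if l ≤ i then (m.choose l : ℂ) * (-(t : ℂ)) ^ (i - l) / (i - l)! else 0) * y ^ i)
      ((fun z : ℂ => Complex.exp (-(t : ℂ) * (z - 1)) * z ^ m) (1 + y)) := by
    intro y
    have h1 := hasSum_exp_poly (-(t : ℂ)) m (fun l => (m.choose l : ℂ)) y
    have hb : ∑ l ∈ range (m + 1), (m.choose l : ℂ) * y ^ l = (1 + y) ^ m := by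
      have h := add_pow y (1 : ℂ) m
      rw [show (y + (1 : ℂ)) = 1 + y by ring] at h
      rw [h]
      exact Finset.sum_congr rfl fun l _ => by simp [mul_comm]
    have e2 : Complex.exp (-(t : ℂ) * y) * ∑ l ∈ range (m + 1), (m.choose l : ℂ) * y ^ l
        = Complex.exp (-(t : ℂ) * ((1 + y) - 1)) * (1 + y) ^ m := by
      rw [hb]
      congr 2
      ring
    rw [show ((fun z : ℂ => Complex.exp (-(t : ℂ) * (z - 1)) * z ^ m) (1 + y))
      = Complex.exp (-(t : ℂ) * ((1 + y) - 1)) * (1 + y) ^ m from rfl, ← e2]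
    exact h1
  have key := circleIntegral_eq_coeff hf 1 (R := (1/4 : NNReal)) (by norm_num) _ H j
  have hrad : (((1/4 : NNReal)) : ℝ) = (1/4 : ℝ) := by norm_num
  rw [hrad] at key
  have eint : (fun z : ℂ => Complex.exp (-(t : ℂ) * (z - 1)) * z ^ ((-(n : ℤ) + m) + n) / (1 - z) ^ (j + 1))
      = fun z : ℂ => ((-1 : ℂ) ^ (j + 1)) • (Complex.exp (-(t : ℂ) * (z - 1)) * z ^ m / (z - 1) ^ (j + 1)) := by
    funext z
    rw [show ((-(n : ℤ) + m) + n) = ((m : ℕ) : ℤ) by push_cast; ring, zpow_natCast, smul_eq_mul]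
    rw [show ((1 : ℂ) - z) = -(z - 1) by ring, neg_pow]
    rw [div_eq_mul_inv, div_eq_mul_inv, mul_inv, ← inv_pow, inv_neg, inv_one]
    ring
  unfold PhiTASEP
  rw [eint, circleIntegral.integral_smul, smul_eq_mul]
  have hsign : ((-1 : ℂ)) * (-1) ^ (j + 1) = (-1) ^ j := by rw [pow_succ]; ring
  calc (-1) / (2 * (Real.pi : ℂ) * Complex.I) * ((-1 : ℂ) ^ (j + 1)
        * ∮ z in C((1 : ℂ), 1/4), Complex.exp (-(t : ℂ) * (z - 1)) * z ^ m / (z - 1) ^ (j + 1))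
      = ((-1 : ℂ) * (-1) ^ (j + 1)) * ((2 * (Real.pi : ℂ) * Complex.I)⁻¹
        * ∮ z in C((1 : ℂ), 1/4), Complex.exp (-(t : ℂ) * (z - 1)) * z ^ m / (z - 1) ^ (j + 1)) := by
        rw [div_eq_mul_inv]; ring
    _ = (-1 : ℂ) ^ j * ∑ l ∈ range (m + 1),
          if l ≤ j then (m.choose l : ℂ) * (-(t : ℂ)) ^ (j - l) / (j - l)! else 0 := by
        rw [hsign, key]
    _ = (-1 : ℂ) ^ j * ∑ l ∈ range (j + 1), (m.choose l : ℂ) * ((-(t : ℂ)) ^ (j - l) / (j - l)!) := by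
      rw [← guard_sum_eq j m (fun l => (-(t : ℂ)) ^ (j - l) / (j - l)!)]
      congr 1
      exact Finset.sum_congr rfl fun l _ => by rw [mul_div_assoc]

lemma lemA (τ : ℂ) (j s : ℕ) (hs : s ≤ j) :
    (∑ l ∈ range (j + 1), if s ≤ l then ((-τ) ^ (j - l) / (j - l)!) * (τ ^ (l - s) / (l - s)!) else 0)
      = if s = j then 1 else 0 := by
  rw [Finset.sum_ite, Finset.sum_const_zero, add_zero]
  have hfil : (range (j + 1)).filter (fun l => s ≤ l) = Finset.Ico s (j + 1) := by
    ext l; simp [Nat.lt_succ_iff]; omega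
  rw [hfil, Finset.sum_Ico_eq_sum_range]
  set d := j - s with hd
  have hjs : j + 1 - s = d + 1 := by omega
  rw [hjs]
  have hterm : ∀ i ∈ range (d + 1),
      ((-τ) ^ (j - (s + i)) / (j - (s + i))! : ℂ) * (τ ^ ((s + i) - s) / ((s + i) - s)!)
        = (1 / (d ! : ℂ)) * (τ ^ i * (-τ) ^ (d - i) * (d.choose i : ℂ)) := by
    intro i hi
    have hi' : i ≤ d := by have := mem_range.1 hi; omega
    have h1 : j - (s + i) = d - i := by omega
    have h2 : (s + i) - s = i := by omega
    rw [h1, h2]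
    have hc : (d.choose i : ℂ) / d ! = 1 / (i ! * (d - i)!) := choose_div_factorial d i hi'
    calc ((-τ) ^ (d - i) / ((d - i)! : ℂ)) * (τ ^ i / i !)
        = τ ^ i * (-τ) ^ (d - i) * (1 / ((i ! : ℂ) * (d - i)!)) := by ring
      _ = τ ^ i * (-τ) ^ (d - i) * ((d.choose i : ℂ) / d !) := by rw [hc]
      _ = (1 / (d ! : ℂ)) * (τ ^ i * (-τ) ^ (d - i) * (d.choose i : ℂ)) := by ring
  rw [Finset.sum_congr rfl hterm, ← Finset.mul_sum, ← add_pow τ (-τ) d]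
  rw [show τ + -τ = 0 by ring, zero_pow_eq]
  by_cases hd0 : d = 0
  · rw [if_pos hd0, if_pos (by omega)]
    simp [hd0]
  · rw [if_neg hd0, if_neg (by omega)]
    simp

lemma inner_l (τ : ℂ) (j b : ℕ) :
    (∑ l ∈ range (j + 1), ((-τ) ^ (j - l) / (j - l)!)
        * ∑ s ∈ range (l + 1), (b.choose s : ℂ) * τ ^ (l - s) / (l - s)!)
      = (b.choose j : ℂ) := by
  have e1 : ∀ l ∈ range (j + 1), ((-τ) ^ (j - l) / ((j - l)! : ℂ))
        * ∑ s ∈ range (l + 1), (b.choose s : ℂ) * τ ^ (l - s) / (l - s)!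
      = ∑ s ∈ range (j + 1), (if s ≤ l then
          (b.choose s : ℂ) * (((-τ) ^ (j - l) / (j - l)!) * (τ ^ (l - s) / (l - s)!)) else 0) := by
    intro l hl
    have hl' : l + 1 ≤ j + 1 := by have := mem_range.1 hl; omega
    rw [Finset.mul_sum]
    rw [← Finset.sum_subset (Finset.range_subset_range.2 hl')
      (fun s _ hs => if_neg (fun h => hs (mem_range.2 (by omega))))]
    refine Finset.sum_congr rfl fun s hs => ?_
    rw [if_pos (by have := mem_range.1 hs; omega)]
    ring
  rw [Finset.sum_congr rfl e1, Finset.sum_comm]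
  have e2 : ∀ s ∈ range (j + 1),
      (∑ l ∈ range (j + 1), if s ≤ l then
          (b.choose s : ℂ) * (((-τ) ^ (j - l) / (j - l)!) * (τ ^ (l - s) / (l - s)!)) else 0)
        = (b.choose s : ℂ) * (if s = j then 1 else 0) := by
    intro s hs
    rw [← lemA τ j s (by have := mem_range.1 hs; omega), Finset.mul_sum]
    refine Finset.sum_congr rfl fun l _ => ?_
    split_ifs <;> simp
  rw [Finset.sum_congr rfl e2]
  rw [Finset.sum_eq_single j (fun s _ hsj => by rw [if_neg hsj, mul_zero])
    (fun h => absurd (self_mem_range_succ j) h)]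
  rw [if_pos rfl, mul_one]

lemma lemB (τ : ℂ) (j k : ℕ) :
    (∑ b ∈ range (k + 1), ((-1 : ℂ) ^ j * ((-1) ^ b * (k.choose b : ℂ))) * (b.choose j : ℂ))
      = if j = k then 1 else 0 := by
  by_cases hjk : j ≤ k
  · have e1 : ∀ b ∈ range (k + 1),
        ((-1 : ℂ) ^ j * ((-1) ^ b * (k.choose b : ℂ))) * (b.choose j : ℂ)
          = if j ≤ b then ((-1 : ℂ) ^ j * ((-1) ^ b * (k.choose b : ℂ))) * (b.choose j : ℂ) else 0 := by
      intro b _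
      by_cases hb : j ≤ b
      · rw [if_pos hb]
      · rw [if_neg hb, Nat.choose_eq_zero_of_lt (show b < j by omega)]
        simp
    rw [Finset.sum_congr rfl e1, Finset.sum_ite, Finset.sum_const_zero, add_zero]
    have hfil : (range (k + 1)).filter (fun b => j ≤ b) = Finset.Ico j (k + 1) := by
      ext b; simp [Nat.lt_succ_iff]; omega
    rw [hfil, Finset.sum_Ico_eq_sum_range]
    have hk1 : k + 1 - j = (k - j) + 1 := by omega
    rw [hk1]
    have e2 : ∀ i ∈ range ((k - j) + 1),
        ((-1 : ℂ) ^ j * ((-1) ^ (j + i) * (k.choose (j + i) : ℂ))) * ((j + i).choose j : ℂ)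
          = (k.choose j : ℂ) * ((-1 : ℂ) ^ i * ((k - j).choose i : ℂ)) := by
      intro i hi
      have hi' : i ≤ k - j := by have := mem_range.1 hi; omega
      have hcc : (k.choose (j + i)) * ((j + i).choose j) = (k.choose j) * ((k - j).choose i) := by
        have := Nat.choose_mul (n := k) (k := j + i) (s := j) (by omega)
        simpa using this
      have hsign : ((-1 : ℂ) ^ j * (-1) ^ (j + i)) = (-1 : ℂ) ^ i := by
        rw [pow_add, ← mul_assoc, ← pow_add, ← two_mul, pow_mul]
        norm_num
      calc ((-1 : ℂ) ^ j * ((-1) ^ (j + i) * (k.choose (j + i) : ℂ))) * ((j + i).choose j : ℂ)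
          = ((-1 : ℂ) ^ j * (-1) ^ (j + i)) * ((k.choose (j + i) : ℂ) * ((j + i).choose j : ℂ)) := by
            ring
        _ = (-1 : ℂ) ^ i * ((k.choose j : ℂ) * ((k - j).choose i : ℂ)) := by
            rw [hsign]; congr 1; exact_mod_cast congrArg (fun x : ℕ => (x : ℂ)) hcc
        _ = (k.choose j : ℂ) * ((-1 : ℂ) ^ i * ((k - j).choose i : ℂ)) := by ring
    rw [Finset.sum_congr rfl e2, ← Finset.mul_sum]
    have halt : (∑ i ∈ range ((k - j) + 1), ((-1 : ℂ) ^ i * ((k - j).choose i : ℂ)))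
        = if k - j = 0 then 1 else 0 := by
      have h := Int.alternating_sum_range_choose (n := k - j)
      have := congrArg (fun x : ℤ => (x : ℂ)) h
      push_cast at this
      rw [this]
    rw [halt]
    by_cases hjk2 : j = k
    · rw [if_pos (by omega), if_pos hjk2]
      subst hjk2
      simp
    · rw [if_neg (by omega), if_neg hjk2, mul_zero]
  · rw [if_neg (by omega)]
    refine Finset.sum_eq_zero fun b hb => ?_
    rw [Nat.choose_eq_zero_of_lt (show b < j by have := mem_range.1 hb; omega)]
    simp

lemma main_hasSum (τ : ℂ) (j k : ℕ) :
    HasSum (fun m : ℕ =>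
      (Complex.exp (-τ) * ∑ b ∈ range (k + 1),
        if b ≤ m then ((-1 : ℂ) ^ b * (k.choose b : ℂ)) * τ ^ (m - b) / (m - b)! else 0)
      * ((-1 : ℂ) ^ j * ∑ l ∈ range (j + 1), (m.choose l : ℂ) * ((-τ) ^ (j - l) / (j - l)!)))
    (if j = k then 1 else 0) := by
  -- per (b,l) infinite sums
  have hbl : ∀ b l : ℕ, HasSum (fun m : ℕ => (if b ≤ m then τ ^ (m - b) / (m - b)! else 0) * (m.choose l : ℂ))
      (Complex.exp τ * ∑ s ∈ range (l + 1), (b.choose s : ℂ) * τ ^ (l - s) / (l - s)!) := by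
    intro b l
    have h2 := hasSum_shift b (hasSum_add_choose_exp τ b l)
    have e : ∀ m : ℕ, (if b ≤ m then (((b + (m - b)).choose l : ℕ) : ℂ) * τ ^ (m - b) / (m - b)! else 0)
        = (if b ≤ m then τ ^ (m - b) / (m - b)! else 0) * (m.choose l : ℂ) := by
      intro m
      by_cases hm : b ≤ m
      · rw [if_pos hm, if_pos hm, Nat.add_sub_cancel' hm]
        ring
      · rw [if_neg hm, if_neg hm, zero_mul]
    simpa only [e] using h2
  set W : ℕ → ℕ → ℂ := fun b l => ∑ s ∈ range (l + 1), (b.choose s : ℂ) * τ ^ (l - s) / (l - s)! with hW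
  set cst : ℕ → ℕ → ℂ := fun b l =>
    Complex.exp (-τ) * (-1 : ℂ) ^ j * ((-1 : ℂ) ^ b * (k.choose b : ℂ)) * ((-τ) ^ (j - l) / (j - l)!) with hcst
  have hinner : ∀ b : ℕ, HasSum
      (fun m : ℕ => ∑ l ∈ range (j + 1), cst b l * ((if b ≤ m then τ ^ (m - b) / (m - b)! else 0) * (m.choose l : ℂ)))
      (∑ l ∈ range (j + 1), cst b l * (Complex.exp τ * W b l)) :=
    fun b => hasSum_sum fun l _ => (hbl b l).mul_left (cst b l)
  have Houter := hasSum_sum (fun b (_ : b ∈ range (k + 1)) => hinner b)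
  -- pointwise identification
  have epoint : ∀ m : ℕ,
      (∑ b ∈ range (k + 1), ∑ l ∈ range (j + 1),
        cst b l * ((if b ≤ m then τ ^ (m - b) / (m - b)! else 0) * (m.choose l : ℂ)))
      = (Complex.exp (-τ) * ∑ b ∈ range (k + 1),
          if b ≤ m then ((-1 : ℂ) ^ b * (k.choose b : ℂ)) * τ ^ (m - b) / (m - b)! else 0)
        * ((-1 : ℂ) ^ j * ∑ l ∈ range (j + 1), (m.choose l : ℂ) * ((-τ) ^ (j - l) / (j - l)!)) := by
    intro m
    rw [show (Complex.exp (-τ) * ∑ b ∈ range (k + 1),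
          if b ≤ m then ((-1 : ℂ) ^ b * (k.choose b : ℂ)) * τ ^ (m - b) / (m - b)! else 0)
        * ((-1 : ℂ) ^ j * ∑ l ∈ range (j + 1), (m.choose l : ℂ) * ((-τ) ^ (j - l) / (j - l)!))
      = (Complex.exp (-τ) * (-1 : ℂ) ^ j) *
        ((∑ b ∈ range (k + 1),
          if b ≤ m then ((-1 : ℂ) ^ b * (k.choose b : ℂ)) * τ ^ (m - b) / (m - b)! else 0)
        * (∑ l ∈ range (j + 1), (m.choose l : ℂ) * ((-τ) ^ (j - l) / (j - l)!))) from by ring]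
    rw [Finset.sum_mul_sum, Finset.mul_sum]
    refine Finset.sum_congr rfl fun b _ => ?_
    rw [Finset.mul_sum]
    refine Finset.sum_congr rfl fun l _ => ?_
    rw [hcst]
    by_cases hm : b ≤ m
    · rw [if_pos hm, if_pos hm]
      ring
    · rw [if_neg hm, if_neg hm]
      ring
  have Hmain : HasSum (fun m : ℕ =>
      (Complex.exp (-τ) * ∑ b ∈ range (k + 1),
        if b ≤ m then ((-1 : ℂ) ^ b * (k.choose b : ℂ)) * τ ^ (m - b) / (m - b)! else 0)
      * ((-1 : ℂ) ^ j * ∑ l ∈ range (j + 1), (m.choose l : ℂ) * ((-τ) ^ (j - l) / (j - l)!)))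
      (∑ b ∈ range (k + 1), ∑ l ∈ range (j + 1), cst b l * (Complex.exp τ * W b l)) := by
    simpa only [epoint] using Houter
  -- evaluate the finite double sum
  have hexp : Complex.exp (-τ) * Complex.exp τ = 1 := by
    rw [← Complex.exp_add]; simp
  have hval : (∑ b ∈ range (k + 1), ∑ l ∈ range (j + 1), cst b l * (Complex.exp τ * W b l))
      = if j = k then 1 else 0 := by
    have e1 : ∀ b ∈ range (k + 1), (∑ l ∈ range (j + 1), cst b l * (Complex.exp τ * W b l))
        = ((-1 : ℂ) ^ j * ((-1) ^ b * (k.choose b : ℂ))) * (b.choose j : ℂ) := by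
      intro b _
      rw [← inner_l τ j b, Finset.mul_sum]
      refine Finset.sum_congr rfl fun l _ => ?_
      rw [hcst]
      calc Complex.exp (-τ) * (-1 : ℂ) ^ j * ((-1 : ℂ) ^ b * (k.choose b : ℂ))
            * ((-τ) ^ (j - l) / (j - l)!) * (Complex.exp τ * W b l)
          = (Complex.exp (-τ) * Complex.exp τ) * ((-1 : ℂ) ^ j * ((-1 : ℂ) ^ b * (k.choose b : ℂ))
            * (((-τ) ^ (j - l) / (j - l)!) * W b l)) := by ring
        _ = (-1 : ℂ) ^ j * ((-1 : ℂ) ^ b * (k.choose b : ℂ)) * (((-τ) ^ (j - l) / (j - l)!) * W b l) := by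
            rw [hexp, one_mul]
    exact (Finset.sum_congr rfl e1).trans (lemB τ j k)
  rw [hval] at Hmain
  exact Hmain

end TASEPBiorthAux

open TASEPBiorthAux Finset in
theorem tasep_biorthogonality (n : ℕ) (hn : 1 ≤ n) (t : ℝ) (ht : 0 < t)
    (j k : ℕ) (hj : j < n) (hk : k < n) :
    ∑' m : ℕ, PsiTASEP n k t (-(n : ℤ) + m) * PhiTASEP n j t (-(n : ℤ) + m)
      = if j = k then 1 else 0 := by
  simp only [psi_eq, phi_eq]
  exact (main_hasSum (t : ℂ) j k).tsum_eq
end
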